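/- If ρ = r/s where s is a power of 2, r is odd and 0 < r < s, then for every positive integer e there exists a Boolean function of degree e·s/2 in n = (2s−1)·2^{e−1} − s variables, depending essentially on all n variables, whose proportion of ones is ρ. -/

import Mathlib

/-- The Hamming graph `H(n, α)`: vertices are words of length `n` over `α`,
adjacent iff they differ in exactly one coordinate. -/
def HammingGraph (n : ℕ) (α : Type*) [DecidableEq α] : SimpleGraph (Fin n → α) where
  Adj x y := hammingDist x y = 1
  symm := ⟨fun (x y : Fin n → α) (h : hammingDist x y = 1) => show hammingDist y x = 1 by rwa [hammingDist_comm]⟩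
  loopless := ⟨fun x (h : hammingDist x x = 1) => by rw [hammingDist_self] at h; exact absurd h (by omega)⟩

instance {n : ℕ} {α : Type*} [DecidableEq α] : DecidableRel (HammingGraph n α).Adj :=
  fun x y => inferInstanceAs (Decidable (hammingDist x y = 1))

/-- `f` is a perfect coloring of `G` with quotient matrix `S`: every vertex of
color `i` has exactly `S i j` neighbors of color `j`. -/
def IsPerfectColoring {V K : Type*} [Fintype V] [DecidableEq K] (G : SimpleGraph V)
    [DecidableRel G.Adj] (f : V → K) (S : K → K → ℕ) : Prop :=
  ∀ x : V, ∀ j : K, (Finset.univ.filter (fun y => G.Adj x y ∧ f y = j)).card = S (f x) j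

/-- A function on words depends essentially on its `k`-th argument. -/
def EssentialDep {α K : Type*} {n : ℕ} (f : (Fin n → α) → K) (k : Fin n) : Prop :=
  ∃ x y : Fin n → α, (∀ t, t ≠ k → x t = y t) ∧ f x ≠ f y


/-- A Boolean function `f : {0,1}ⁿ → {0,1}` has degree `d` if its unique multilinear
real-polynomial representation has degree exactly `d`. -/
def HasBooleanDegree {n : ℕ} (f : (Fin n → ZMod 2) → Bool) (d : ℕ) : Prop :=
  ∃ a : Finset (Fin n) → ℝ,
    (∀ x, (if f x then (1 : ℝ) else 0)
        = ∑ T : Finset (Fin n), a T * ∏ i ∈ T, (if x i = 1 then (1 : ℝ) else 0)) ∧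
    (∀ T, a T ≠ 0 → T.card ≤ d) ∧ (∃ T, T.card = d ∧ a T ≠ 0)

open Finset

abbrev V := ZMod 2
abbrev BF (n : ℕ) := (Fin n → V) → Bool
abbrev RF (n : ℕ) := (Fin n → V) → ℝ

def Rl {n : ℕ} (f : BF n) : RF n := fun x => if f x then (1:ℝ) else 0

def indic {n : ℕ} (S : Finset (Fin n)) : Fin n → V := fun i => if i ∈ S then 1 else 0

def coeff {n : ℕ} (F : RF n) (T : Finset (Fin n)) : ℝ :=
  ∑ S ∈ T.powerset, (-1:ℝ)^(T.card - S.card) * F (indic S)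

def icoeff {n : ℕ} (f : BF n) (T : Finset (Fin n)) : ℤ :=
  ∑ S ∈ T.powerset, (-1:ℤ)^(T.card - S.card) * (if f (indic S) then 1 else 0)

lemma coeff_Rl {n : ℕ} (f : BF n) (T : Finset (Fin n)) :
    coeff (Rl f) T = (icoeff f T : ℝ) := by
  unfold coeff icoeff Rl
  push_cast
  exact Finset.sum_congr rfl (fun S _ => by split <;> simp

)

lemma zmod2_cases (a : V) : a = 0 ∨ a = 1 := by revert a; decide

lemma alt_powR {n : ℕ} (s : Finset (Fin n)) :
    ∑ m ∈ s.powerset, (-1:ℝ) ^ m.card = if s = ∅ then 1 else 0 := by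
  have := @Finset.sum_powerset_neg_one_pow_card (Fin n) _ s
  have h2 : ((∑ m ∈ s.powerset, (-1:ℤ) ^ m.card : ℤ) : ℝ)
      = ∑ m ∈ s.powerset, (-1:ℝ) ^ m.card := by push_cast; rfl
  rw [← h2, this]; split <;> norm_num

lemma eq_indic {n : ℕ} (x : Fin n → V) : x = indic (univ.filter (fun i => x i = 1)) := by
  funext i
  rcases zmod2_cases (x i) with h | h <;> simp [indic, h]

lemma neg_one_pow_sub {a b : ℕ} (h : b ≤ a) : ((-1:ℝ))^(a-b) = (-1:ℝ)^a * (-1:ℝ)^b := by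
  have : (-1:ℝ)^(a-b) * (-1:ℝ)^b = (-1:ℝ)^a := by
    rw [← pow_add]; congr 1; omega
  have hb : ((-1:ℝ)^b) * ((-1:ℝ)^b) = 1 := by
    rcases Nat.even_or_odd b with h | h
    · rw [h.neg_one_pow]; norm_num
    · rw [h.neg_one_pow]; norm_num
  calc (-1:ℝ)^(a-b) = (-1:ℝ)^(a-b) * ((-1:ℝ)^b * (-1:ℝ)^b) := by rw [hb, mul_one]
    _ = ((-1:ℝ)^(a-b) * (-1:ℝ)^b) * (-1:ℝ)^b := by ring
    _ = (-1:ℝ)^a * (-1:ℝ)^b := by rw [this]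

lemma coeff_const {n : ℕ} (c : ℝ) (T : Finset (Fin n)) :
    coeff (fun _ => c) T = if T = ∅ then c else 0 := by
  unfold coeff
  have : ∀ S ∈ T.powerset, (-1:ℝ)^(T.card - S.card) * c
      = (-1:ℝ)^(T.card) * ((-1:ℝ)^S.card * c) := by
    intro S hS
    rw [neg_one_pow_sub (card_le_card (mem_powerset.1 hS))]; ring
  rw [Finset.sum_congr rfl this, ← Finset.mul_sum, ← Finset.sum_mul, alt_powR]
  split
  · subst ‹T = ∅›; simp
  · simp

/-- inner alternating sum -/
lemma alt_sum_between {n : ℕ} (S0 S : Finset (Fin n)) (hS : S ⊆ S0) :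
    ∑ T ∈ S0.powerset.filter (fun T => S ⊆ T), (-1:ℝ)^(T.card - S.card)
      = if S = S0 then 1 else 0 := by
  have key : ∑ T ∈ S0.powerset.filter (fun T => S ⊆ T), (-1:ℝ)^(T.card - S.card)
      = ∑ T' ∈ (S0 \ S).powerset, (-1:ℝ)^(T'.card) := by
    refine Finset.sum_bij' (fun T _ => T \ S) (fun T' _ => T' ∪ S) ?_ ?_ ?_ ?_ ?_
    · intro T hT
      simp only [mem_filter, mem_powerset] at hT
      exact mem_powerset.2 (sdiff_subset_sdiff hT.1 (Finset.Subset.refl _))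
    · intro T' hT'
      simp only [mem_powerset] at hT'
      simp only [mem_filter, mem_powerset]
      constructor
      · exact union_subset (hT'.trans sdiff_subset) hS
      · exact subset_union_right
    · intro T hT
      simp only [mem_filter, mem_powerset] at hT
      exact sdiff_union_of_subset hT.2
    · intro T' hT'
      simp only [mem_powerset] at hT'
      have : Disjoint T' S := disjoint_of_subset_left hT' sdiff_disjoint
      exact Finset.union_sdiff_cancel_right this
    · intro T hT
      simp only [mem_filter, mem_powerset] at hT
      rw [card_sdiff_of_subset hT.2]
  rw [key, alt_powR]
  by_cases h : S = S0
  · subst h; simp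
  · have h2 : S0 \ S ≠ ∅ := by
      intro hh
      exact h (Finset.Subset.antisymm hS (Finset.sdiff_eq_empty_iff_subset.1 hh))
    rw [if_neg h2, if_neg h]

lemma powerset_eq_filter {n : ℕ} (S0 T : Finset (Fin n)) (hT : T ⊆ S0) :
    T.powerset = S0.powerset.filter (fun S => S ⊆ T) := by
  ext S
  simp only [mem_powerset, mem_filter]
  exact ⟨fun h => ⟨h.trans hT, h⟩, fun h => h.2⟩

lemma sum_coeff_powerset {n : ℕ} (F : RF n) (S0 : Finset (Fin n)) :
    ∑ T ∈ S0.powerset, coeff F T = F (indic S0) := by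
  unfold coeff
  calc ∑ T ∈ S0.powerset, ∑ S ∈ T.powerset, (-1:ℝ)^(T.card - S.card) * F (indic S)
      = ∑ T ∈ S0.powerset, ∑ S ∈ S0.powerset,
          (if S ⊆ T then (-1:ℝ)^(T.card - S.card) * F (indic S) else 0) := by
        refine Finset.sum_congr rfl (fun T hT => ?_)
        rw [powerset_eq_filter S0 T (mem_powerset.1 hT), Finset.sum_filter]
    _ = ∑ S ∈ S0.powerset, ∑ T ∈ S0.powerset,
          (if S ⊆ T then (-1:ℝ)^(T.card - S.card) * F (indic S) else 0) := Finset.sum_comm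
    _ = ∑ S ∈ S0.powerset,
          (∑ T ∈ S0.powerset.filter (fun T => S ⊆ T), (-1:ℝ)^(T.card - S.card)) * F (indic S) := by
        refine Finset.sum_congr rfl (fun S hS => ?_)
        rw [Finset.sum_filter, Finset.sum_mul]
        exact Finset.sum_congr rfl (fun T hT => by split <;> simp)
    _ = ∑ S ∈ S0.powerset, (if S = S0 then (1:ℝ) else 0) * F (indic S) := by
        refine Finset.sum_congr rfl (fun S hS => ?_)
        rw [alt_sum_between S0 S (mem_powerset.1 hS)]
    _ = F (indic S0) := by
        have : ∀ S ∈ S0.powerset, (if S = S0 then (1:ℝ) else 0) * F (indic S)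
            = if S = S0 then F (indic S) else 0 := by
          intro S _; split <;> simp
        rw [Finset.sum_congr rfl this, Finset.sum_ite_eq' S0.powerset S0 (fun S => F (indic S))]
        simp

lemma mono_eq {n : ℕ} (T : Finset (Fin n)) (x : Fin n → V) :
    (∏ i ∈ T, (if x i = 1 then (1:ℝ) else 0))
      = if T ⊆ univ.filter (fun i => x i = 1) then (1:ℝ) else 0 := by
  by_cases h : T ⊆ univ.filter (fun i => x i = 1)
  · rw [if_pos h]
    refine Finset.prod_eq_one (fun i hi => ?_)
    have := h hi
    simp only [mem_filter] at this
    rw [if_pos this.2]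
  · rw [if_neg h]
    rw [Finset.subset_iff] at h
    push_neg at h
    obtain ⟨i, hi, hni⟩ := h
    refine Finset.prod_eq_zero hi ?_
    simp only [mem_filter, mem_univ, true_and] at hni
    rw [if_neg hni]

theorem inversion {n : ℕ} (F : RF n) (x : Fin n → V) :
    F x = ∑ T : Finset (Fin n), coeff F T * ∏ i ∈ T, (if x i = 1 then (1:ℝ) else 0) := by
  set S0 := univ.filter (fun i => x i = 1) with hS0
  have step1 : ∑ T : Finset (Fin n), coeff F T * ∏ i ∈ T, (if x i = 1 then (1:ℝ) else 0)
      = ∑ T : Finset (Fin n), (if T ⊆ S0 then coeff F T else 0) := by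
    refine Finset.sum_congr rfl (fun T _ => ?_)
    rw [mono_eq, ← hS0, mul_ite, mul_one, mul_zero]
  have step2 : ∑ T : Finset (Fin n), (if T ⊆ S0 then coeff F T else 0)
      = ∑ T ∈ S0.powerset, coeff F T := by
    rw [← Finset.sum_filter]
    refine Finset.sum_congr ?_ (fun _ _ => rfl)
    ext T; simp [mem_powerset]
  rw [step1, step2, sum_coeff_powerset]
  conv_lhs => rw [eq_indic x]
section Split
variable {a b : ℕ}

lemma natAdd_inj : Function.Injective (Fin.natAdd a : Fin b → Fin (a+b)) := by
  intro i j h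
  have : (Fin.natAdd a i).val = (Fin.natAdd a j).val := by rw [h]
  simp [Fin.natAdd] at this
  exact Fin.ext this

def vL (z : Fin (a+b) → V) : Fin a → V := fun i => z (Fin.castAdd b i)
def vR (z : Fin (a+b) → V) : Fin b → V := fun i => z (Fin.natAdd a i)

def emL : Fin a ↪ Fin (a+b) := ⟨Fin.castAdd b, Fin.castAdd_injective a b⟩
def emR : Fin b ↪ Fin (a+b) := ⟨Fin.natAdd a, natAdd_inj⟩

noncomputable def pL (U : Finset (Fin (a+b))) : Finset (Fin a) :=
  U.preimage (Fin.castAdd b) ((Fin.castAdd_injective a b).injOn)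
noncomputable def pR (U : Finset (Fin (a+b))) : Finset (Fin b) :=
  U.preimage (Fin.natAdd a) (natAdd_inj.injOn)

lemma mem_pL {U : Finset (Fin (a+b))} {i : Fin a} : i ∈ pL U ↔ Fin.castAdd b i ∈ U :=
  Finset.mem_preimage
lemma mem_pR {U : Finset (Fin (a+b))} {i : Fin b} : i ∈ pR U ↔ Fin.natAdd a i ∈ U :=
  Finset.mem_preimage

lemma disjLR (i : Fin a) (j : Fin b) : Fin.castAdd b i ≠ Fin.natAdd a j := by
  intro h
  have : (Fin.castAdd b i).val = (Fin.natAdd a j).val := by rw [h]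
  simp [Fin.castAdd, Fin.natAdd, Fin.castLE] at this
  omega

lemma cases_fin (j : Fin (a+b)) : (∃ i, j = Fin.castAdd b i) ∨ (∃ i, j = Fin.natAdd a i) :=
  Fin.addCases (motive := fun j => (∃ i, j = Fin.castAdd b i) ∨ (∃ i, j = Fin.natAdd a i))
    (fun i => Or.inl ⟨i, rfl⟩) (fun i => Or.inr ⟨i, rfl⟩) j

lemma mem_union_maps_L {S1 : Finset (Fin a)} {S2 : Finset (Fin b)} {i : Fin a} :
    Fin.castAdd b i ∈ (S1.map emL ∪ S2.map emR) ↔ i ∈ S1 := by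
  simp only [Finset.mem_union, Finset.mem_map, emL, emR, Function.Embedding.coeFn_mk]
  constructor
  · rintro (⟨i', hi', he⟩ | ⟨j', hj', he⟩)
    · rwa [← Fin.castAdd_injective a b he]
    · exact absurd he.symm (disjLR i j')
  · intro h; exact Or.inl ⟨i, h, rfl⟩

lemma mem_union_maps_R {S1 : Finset (Fin a)} {S2 : Finset (Fin b)} {j : Fin b} :
    Fin.natAdd a j ∈ (S1.map emL ∪ S2.map emR) ↔ j ∈ S2 := by
  simp only [Finset.mem_union, Finset.mem_map, emL, emR, Function.Embedding.coeFn_mk]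
  constructor
  · rintro (⟨i', hi', he⟩ | ⟨j', hj', he⟩)
    · exact absurd he (disjLR i' j)
    · rwa [← natAdd_inj he]
  · intro h; exact Or.inr ⟨j, h, rfl⟩

lemma decomp (U : Finset (Fin (a+b))) : U = (pL U).map emL ∪ (pR U).map emR := by
  ext j
  rcases cases_fin j with ⟨i, rfl⟩ | ⟨i, rfl⟩
  · rw [mem_union_maps_L, mem_pL]
  · rw [mem_union_maps_R, mem_pR]

lemma pL_union_maps (S1 : Finset (Fin a)) (S2 : Finset (Fin b)) :
    pL (S1.map emL ∪ S2.map emR) = S1 := by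
  ext i; rw [mem_pL, mem_union_maps_L]

lemma pR_union_maps (S1 : Finset (Fin a)) (S2 : Finset (Fin b)) :
    pR (S1.map emL ∪ S2.map emR) = S2 := by
  ext i; rw [mem_pR, mem_union_maps_R]

lemma disj_maps (S1 : Finset (Fin a)) (S2 : Finset (Fin b)) :
    Disjoint (S1.map emL) (S2.map emR) := by
  rw [Finset.disjoint_left]
  rintro x hx1 hx2
  simp only [Finset.mem_map, emL, emR, Function.Embedding.coeFn_mk] at hx1 hx2
  obtain ⟨i, _, rfl⟩ := hx1
  obtain ⟨j, _, he⟩ := hx2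
  exact disjLR i j he.symm

lemma card_union_maps (S1 : Finset (Fin a)) (S2 : Finset (Fin b)) :
    (S1.map emL ∪ S2.map emR).card = S1.card + S2.card := by
  rw [Finset.card_union_of_disjoint (disj_maps S1 S2), Finset.card_map, Finset.card_map]

lemma card_decomp (U : Finset (Fin (a+b))) : U.card = (pL U).card + (pR U).card := by
  conv_lhs => rw [decomp U]
  exact card_union_maps _ _

lemma pL_mono {S U : Finset (Fin (a+b))} (h : S ⊆ U) : pL S ⊆ pL U := by
  intro i hi; rw [mem_pL] at *; exact h hi

lemma pR_mono {S U : Finset (Fin (a+b))} (h : S ⊆ U) : pR S ⊆ pR U := by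
  intro i hi; rw [mem_pR] at *; exact h hi

lemma union_maps_subset {S1 : Finset (Fin a)} {S2 : Finset (Fin b)} {U : Finset (Fin (a+b))}
    (h1 : S1 ⊆ pL U) (h2 : S2 ⊆ pR U) : (S1.map emL ∪ S2.map emR) ⊆ U := by
  intro j hj
  rcases cases_fin j with ⟨i, rfl⟩ | ⟨i, rfl⟩
  · rw [mem_union_maps_L] at hj; exact mem_pL.1 (h1 hj)
  · rw [mem_union_maps_R] at hj; exact mem_pR.1 (h2 hj)

lemma vL_indic (U : Finset (Fin (a+b))) : vL (indic U) = indic (pL U) := by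
  funext i
  simp only [vL, indic]
  exact if_congr mem_pL.symm rfl rfl

lemma vR_indic (U : Finset (Fin (a+b))) : vR (indic U) = indic (pR U) := by
  funext i
  simp only [vR, indic]
  exact if_congr mem_pR.symm rfl rfl

lemma sum_powerset_split (U : Finset (Fin (a+b))) (h : Finset (Fin (a+b)) → ℝ) :
    ∑ S ∈ U.powerset, h S
      = ∑ P ∈ (pL U).powerset ×ˢ (pR U).powerset, h (P.1.map emL ∪ P.2.map emR) := by
  refine Finset.sum_bij' (fun S _ => (pL S, pR S))
    (fun P _ => P.1.map emL ∪ P.2.map emR) ?_ ?_ ?_ ?_ ?_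
  · intro S hS
    rw [Finset.mem_powerset] at hS
    rw [Finset.mem_product]
    exact ⟨Finset.mem_powerset.2 (pL_mono hS), Finset.mem_powerset.2 (pR_mono hS)⟩
  · intro P hP
    rw [Finset.mem_product, Finset.mem_powerset, Finset.mem_powerset] at hP
    exact Finset.mem_powerset.2 (union_maps_subset hP.1 hP.2)
  · intro S _
    dsimp only
    exact (decomp S).symm
  · intro P _
    rw [pL_union_maps, pR_union_maps]
  · intro S _
    dsimp only
    rw [← decomp S]

lemma coeff_mul_split (F : RF a) (G : RF b) (U : Finset (Fin (a+b))) :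
    coeff (fun z => F (vL z) * G (vR z)) U = coeff F (pL U) * coeff G (pR U) := by
  unfold coeff
  rw [sum_powerset_split U, Finset.sum_product, Finset.sum_mul_sum]
  refine Finset.sum_congr rfl (fun S1 hS1 => Finset.sum_congr rfl (fun S2 hS2 => ?_))
  rw [Finset.mem_powerset] at hS1 hS2
  have hc1 : S1.card ≤ (pL U).card := Finset.card_le_card hS1
  have hc2 : S2.card ≤ (pR U).card := Finset.card_le_card hS2
  have hcard : (S1.map emL ∪ S2.map emR).card = S1.card + S2.card := card_union_maps _ _
  have hpow : ((-1:ℝ))^(U.card - (S1.map emL ∪ S2.map emR).card)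
      = (-1:ℝ)^((pL U).card - S1.card) * (-1:ℝ)^((pR U).card - S2.card) := by
    rw [hcard, card_decomp U, ← pow_add]
    congr 1
    omega
  have hL : vL (indic (S1.map emL ∪ S2.map emR)) = indic S1 := by
    rw [vL_indic, pL_union_maps]
  have hR : vR (indic (S1.map emL ∪ S2.map emR)) = indic S2 := by
    rw [vR_indic, pR_union_maps]
  dsimp only
  rw [hpow, hL, hR]
  ring

lemma coeff_liftL (F : RF a) (U : Finset (Fin (a+b))) :
    coeff (fun z => F (vL z)) U = if pR U = ∅ then coeff F (pL U) else 0 := by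
  have he : (fun z : Fin (a+b) → V => F (vL z))
      = fun z => F (vL z) * (fun _ : Fin b → V => (1:ℝ)) (vR z) := by
    funext z; rw [mul_one]
  rw [he, coeff_mul_split F (fun _ => (1:ℝ)) U, coeff_const]
  split <;> ring

lemma coeff_liftR (G : RF b) (U : Finset (Fin (a+b))) :
    coeff (fun z => G (vR z)) U = if pL U = ∅ then coeff G (pR U) else 0 := by
  have he : (fun z : Fin (a+b) → V => G (vR z))
      = fun z => (fun _ : Fin a → V => (1:ℝ)) (vL z) * G (vR z) := by
    funext z; rw [one_mul]
  rw [he, coeff_mul_split (fun _ => (1:ℝ)) G U, coeff_const]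
  split <;> ring

end Split

lemma coeff_add {n : ℕ} (F G : RF n) (T : Finset (Fin n)) :
    coeff (fun z => F z + G z) T = coeff F T + coeff G T := by
  unfold coeff
  rw [← Finset.sum_add_distrib]
  exact Finset.sum_congr rfl (fun S _ => by ring)

lemma coeff_sub {n : ℕ} (F G : RF n) (T : Finset (Fin n)) :
    coeff (fun z => F z - G z) T = coeff F T - coeff G T := by
  unfold coeff
  rw [← Finset.sum_sub_distrib]
  exact Finset.sum_congr rfl (fun S _ => by ring)

lemma coeff_cmul {n : ℕ} (c : ℝ) (F : RF n) (T : Finset (Fin n)) :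
    coeff (fun z => c * F z) T = c * coeff F T := by
  unfold coeff
  rw [Finset.mul_sum]
  exact Finset.sum_congr rfl (fun S _ => by ring)
section Counting
variable {a b : ℕ}

lemma vL_append (x : Fin a → V) (y : Fin b → V) : vL (Fin.append x y) = x := by
  funext i; exact Fin.append_left x y i

lemma vR_append (x : Fin a → V) (y : Fin b → V) : vR (Fin.append x y) = y := by
  funext i; exact Fin.append_right x y i

lemma append_vLvR (z : Fin (a+b) → V) : Fin.append (vL z) (vR z) = z := by
  funext j
  rcases cases_fin j with ⟨i, rfl⟩ | ⟨i, rfl⟩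
  · exact Fin.append_left _ _ i
  · exact Fin.append_right _ _ i

def splitEquiv : ((Fin a → V) × (Fin b → V)) ≃ (Fin (a+b) → V) where
  toFun q := Fin.append q.1 q.2
  invFun z := (vL z, vR z)
  left_inv q := by simp [vL_append, vR_append]
  right_inv z := append_vLvR z

lemma sum_split {M : Type*} [AddCommMonoid M] (F : (Fin (a+b) → V) → M) :
    ∑ z : Fin (a+b) → V, F z = ∑ x : Fin a → V, ∑ y : Fin b → V, F (Fin.append x y) := by
  calc ∑ z : Fin (a+b) → V, F z
      = ∑ q : (Fin a → V) × (Fin b → V), F (Fin.append q.1 q.2) :=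
        Fintype.sum_equiv splitEquiv.symm F (fun q => F (Fin.append q.1 q.2))
          (fun z => by simp only [splitEquiv, Equiv.coe_fn_symm_mk, append_vLvR])
    _ = ∑ x : Fin a → V, ∑ y : Fin b → V, F (Fin.append x y) :=
        Fintype.sum_prod_type _

lemma card_space (n : ℕ) : Fintype.card (Fin n → V) = 2^n := by
  rw [Fintype.card_fun]
  simp

lemma sum_bool {n : ℕ} {M : Type*} [AddCommMonoid M] {f : BF n} {c : ℕ}
    (hc : (Finset.univ.filter fun x => f x = true).card = c) (h : Bool → M) :
    ∑ x : Fin n → V, h (f x) = c • h true + (2^n - c) • h false := by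
  classical
  have hsplit := Finset.sum_filter_add_sum_filter_not Finset.univ
    (fun x => f x = true) (fun x => h (f x))
  have h1 : ∑ x ∈ Finset.univ.filter (fun x => f x = true), h (f x)
      = c • h true := by
    rw [Finset.sum_congr rfl (fun x hx => by
      rw [(Finset.mem_filter.1 hx).2]), Finset.sum_const, hc]
  have h2 : ∑ x ∈ Finset.univ.filter (fun x => ¬ f x = true), h (f x)
      = (2^n - c) • h false := by
    rw [Finset.sum_congr rfl (fun x hx => by
      rw [show f x = false from by simpa using (Finset.mem_filter.1 hx).2]), Finset.sum_const]
    congr 1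
    have := Finset.card_filter_add_card_filter_not (s := (Finset.univ : Finset (Fin n → V)))
      (p := fun x => f x = true)
    rw [hc] at this
    have hcard : (Finset.univ : Finset (Fin n → V)).card = 2^n := by
      rw [Finset.card_univ, card_space]
    omega
  rw [← hsplit, h1, h2]

lemma cnt_le {n : ℕ} (f : BF n) : (Finset.univ.filter fun x => f x = true).card ≤ 2^n := by
  calc (Finset.univ.filter fun x => f x = true).card ≤ (Finset.univ : Finset (Fin n → V)).card :=
        Finset.card_le_card (Finset.filter_subset _ _)
    _ = 2^n := by rw [Finset.card_univ, card_space]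

lemma exists_true_pt {n : ℕ} {f : BF n} {c : ℕ}
    (h : (Finset.univ.filter fun x => f x = true).card = c) (hc : 0 < c) :
    ∃ x, f x = true := by
  rw [← h] at hc
  obtain ⟨x, hx⟩ := Finset.card_pos.1 hc
  exact ⟨x, (Finset.mem_filter.1 hx).2⟩

lemma exists_false_pt {n : ℕ} {f : BF n} {c : ℕ}
    (h : (Finset.univ.filter fun x => f x = true).card = c) (hc : c < 2^n) :
    ∃ x, f x = false := by
  by_contra hcon
  push_neg at hcon
  have : Finset.univ.filter (fun x => f x = true) = Finset.univ := by
    refine Finset.filter_true_of_mem (fun x _ => ?_)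
    cases hfx : f x
    · exact absurd hfx (hcon x)
    · rfl
  rw [this, Finset.card_univ, card_space] at h
  omega

lemma card_filter_eq_sum {n : ℕ} (f : BF n) :
    (Finset.univ.filter fun x => f x = true).card
      = ∑ x : Fin n → V, (if f x = true then 1 else 0) :=
  Finset.card_filter _ _

end Counting

structure Spec {n : ℕ} (f : BF n) (d c : ℕ) : Prop where
  dle : ∀ T, coeff (Rl f) T ≠ 0 → T.card ≤ d
  top : ∃ T, T.card = d ∧ coeff (Rl f) T ≠ 0
  ess : ∀ k, EssentialDep f k
  cnt : (Finset.univ.filter fun x => f x = true).card = c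
@[simp] lemma V01 : ((0:V) = 1) ↔ False := by constructor <;> intro h <;> exact absurd h (by decide)
@[simp] lemma V10 : ((1:V) = 0) ↔ False := by constructor <;> intro h <;> exact absurd h (by decide)

def bNOT {n : ℕ} (f : BF n) : BF n := fun x => ! f x
def bAND {a b : ℕ} (f : BF a) (g : BF b) : BF (a+b) := fun z => f (vL z) && g (vR z)
def bXOR {a b : ℕ} (f : BF a) (g : BF b) : BF (a+b) := fun z => Bool.xor (f (vL z)) (g (vR z))

lemma spec_not {n d c : ℕ} {f : BF n} (hf : Spec f d c) (hd : 1 ≤ d) :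
    Spec (bNOT f) d (2^n - c) := by
  have hid : Rl (bNOT f) = fun x => (1:ℝ) - Rl f x := by
    funext x; cases h : f x <;> simp [Rl, bNOT, h]
  have hco : ∀ T, coeff (Rl (bNOT f)) T = (if T = ∅ then 1 else 0) - coeff (Rl f) T := by
    intro T
    rw [hid]
    have : (fun x : Fin n → V => (1:ℝ) - Rl f x)
        = fun x => (fun _ : Fin n → V => (1:ℝ)) x - Rl f x := rfl
    rw [this, coeff_sub, coeff_const]
  constructor
  · intro T hT
    rw [hco] at hT
    by_cases he : T = ∅
    · subst he; simp
    · rw [if_neg he] at hT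
      refine hf.dle T (fun h0 => hT ?_)
      rw [h0, sub_zero]
  · obtain ⟨T, hTc, hT⟩ := hf.top
    refine ⟨T, hTc, ?_⟩
    rw [hco]
    have : T ≠ ∅ := by
      intro h; rw [h] at hTc; simp at hTc; omega
    rw [if_neg this, zero_sub, neg_ne_zero]
    exact hT
  · intro k
    obtain ⟨x, y, hxy, hne⟩ := hf.ess k
    exact ⟨x, y, hxy, by simp [bNOT]; exact fun h => hne (by cases hx : f x <;> cases hy : f y <;>
      simp_all)⟩
  · have heq : Finset.univ.filter (fun x => bNOT f x = true)
        = Finset.univ.filter (fun x => ¬ f x = true) := by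
      refine Finset.filter_congr (fun x _ => ?_)
      cases h : f x <;> simp [bNOT, h]
    have := Finset.card_filter_add_card_filter_not
      (s := (Finset.univ : Finset (Fin n → V))) (p := fun x => f x = true)
    rw [hf.cnt, Finset.card_univ, card_space] at this
    rw [heq]
    omega

lemma spec_and {a b d1 d2 c1 c2 : ℕ} {f : BF a} {g : BF b}
    (hf : Spec f d1 c1) (hg : Spec g d2 c2) (h1 : 0 < c1) (h2 : 0 < c2) :
    Spec (bAND f g) (d1 + d2) (c1 * c2) := by
  have hid : Rl (bAND f g) = fun z => Rl f (vL z) * Rl g (vR z) := by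
    funext z; cases hx : f (vL z) <;> cases hy : g (vR z) <;> simp [Rl, bAND, hx, hy]
  have hco : ∀ U, coeff (Rl (bAND f g)) U = coeff (Rl f) (pL U) * coeff (Rl g) (pR U) := by
    intro U; rw [hid, coeff_mul_split]
  constructor
  · intro T hT
    rw [hco] at hT
    have hL := hf.dle _ (left_ne_zero_of_mul hT)
    have hR := hg.dle _ (right_ne_zero_of_mul hT)
    rw [card_decomp T]
    omega
  · obtain ⟨T1, hT1c, hT1⟩ := hf.top
    obtain ⟨T2, hT2c, hT2⟩ := hg.top
    refine ⟨T1.map emL ∪ T2.map emR, ?_, ?_⟩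
    · rw [card_union_maps, hT1c, hT2c]
    · rw [hco, pL_union_maps, pR_union_maps]
      exact mul_ne_zero hT1 hT2
  · intro k
    rcases cases_fin k with ⟨i, rfl⟩ | ⟨j, rfl⟩
    · obtain ⟨x, x', hxx, hne⟩ := hf.ess i
      obtain ⟨y0, hy0⟩ := exists_true_pt hg.cnt h2
      refine ⟨Fin.append x y0, Fin.append x' y0, ?_, ?_⟩
      · intro t ht
        rcases cases_fin t with ⟨i', rfl⟩ | ⟨j', rfl⟩
        · rw [Fin.append_left, Fin.append_left]
          exact hxx i' (fun hii => ht (by rw [hii]))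
        · rw [Fin.append_right, Fin.append_right]
      · simp only [bAND, vL_append, vR_append, hy0, Bool.and_true]
        exact hne
    · obtain ⟨y, y', hyy, hne⟩ := hg.ess j
      obtain ⟨x0, hx0⟩ := exists_true_pt hf.cnt h1
      refine ⟨Fin.append x0 y, Fin.append x0 y', ?_, ?_⟩
      · intro t ht
        rcases cases_fin t with ⟨i', rfl⟩ | ⟨j', rfl⟩
        · rw [Fin.append_left, Fin.append_left]
        · rw [Fin.append_right, Fin.append_right]
          exact hyy j' (fun hjj => ht (by rw [hjj]))
      · simp only [bAND, vL_append, vR_append, hx0, Bool.true_and]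
        exact hne
  · rw [card_filter_eq_sum, sum_split]
    have : ∀ x : Fin a → V, ∑ y : Fin b → V,
        (if bAND f g (Fin.append x y) = true then 1 else 0)
        = (fun A => if A = true then c2 else 0) (f x) := by
      intro x
      have : ∀ y : Fin b → V, (if bAND f g (Fin.append x y) = true then (1:ℕ) else 0)
          = (fun B => if (f x && B) = true then (1:ℕ) else 0) (g y) := by
        intro y; simp only [bAND, vL_append, vR_append]
      rw [Finset.sum_congr rfl (fun y _ => this y),
        sum_bool hg.cnt (fun B => if (f x && B) = true then (1:ℕ) else 0)]
      cases hx : f x <;> simp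
    rw [Finset.sum_congr rfl (fun x _ => this x),
      sum_bool hf.cnt (fun A => if A = true then c2 else 0)]
    simp [mul_comm]

lemma spec_xor {a b d1 d2 c1 c2 : ℕ} {f : BF a} {g : BF b}
    (hf : Spec f d1 c1) (hg : Spec g d2 c2) (hd1 : 1 ≤ d1) (hd2 : 1 ≤ d2) :
    Spec (bXOR f g) (d1 + d2) (c1 * (2^b - c2) + (2^a - c1) * c2) := by
  have hid : Rl (bXOR f g) = fun z => (Rl f (vL z) + Rl g (vR z))
      - (2:ℝ) * (Rl f (vL z) * Rl g (vR z)) := by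
    funext z; cases hx : f (vL z) <;> cases hy : g (vR z) <;>
      simp [Rl, bXOR, hx, hy] <;> norm_num
  have hco : ∀ U, coeff (Rl (bXOR f g)) U
      = ((if pR U = ∅ then coeff (Rl f) (pL U) else 0)
          + (if pL U = ∅ then coeff (Rl g) (pR U) else 0))
        - 2 * (coeff (Rl f) (pL U) * coeff (Rl g) (pR U)) := by
    intro U
    rw [hid]
    have e1 : (fun z : Fin (a+b) → V => (Rl f (vL z) + Rl g (vR z))
        - (2:ℝ) * (Rl f (vL z) * Rl g (vR z)))
        = fun z => ((fun w => Rl f (vL w) + Rl g (vR w)) z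
            - (fun w => (2:ℝ) * ((fun v => Rl f (vL v) * Rl g (vR v)) w)) z) := rfl
    rw [e1, coeff_sub]
    have e2 : (fun w : Fin (a+b) → V => Rl f (vL w) + Rl g (vR w))
        = fun w => (fun v => Rl f (vL v)) w + (fun v => Rl g (vR v)) w := rfl
    rw [e2, coeff_add, coeff_cmul, coeff_mul_split, coeff_liftL, coeff_liftR]
  constructor
  · intro T hT
    rw [hco] at hT
    have h3 : (if pR T = ∅ then coeff (Rl f) (pL T) else 0) ≠ 0
        ∨ (if pL T = ∅ then coeff (Rl g) (pR T) else 0) ≠ 0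
        ∨ coeff (Rl f) (pL T) * coeff (Rl g) (pR T) ≠ 0 := by
      by_contra hcon
      push_neg at hcon
      rw [hcon.1, hcon.2.1, hcon.2.2] at hT
      simp at hT
    rw [card_decomp T]
    rcases h3 with h3 | h3 | h3
    · split at h3
      · have := hf.dle _ h3
        have hz : (pR T).card = 0 := by rw [‹pR T = ∅›]; simp
        omega
      · simp at h3
    · split at h3
      · have := hg.dle _ h3
        have hz : (pL T).card = 0 := by rw [‹pL T = ∅›]; simp
        omega
      · simp at h3
    · have := hf.dle _ (left_ne_zero_of_mul h3)
      have := hg.dle _ (right_ne_zero_of_mul h3)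
      omega
  · obtain ⟨T1, hT1c, hT1⟩ := hf.top
    obtain ⟨T2, hT2c, hT2⟩ := hg.top
    refine ⟨T1.map emL ∪ T2.map emR, ?_, ?_⟩
    · rw [card_union_maps, hT1c, hT2c]
    · rw [hco, pL_union_maps, pR_union_maps]
      have hne1 : T1 ≠ ∅ := by
        intro h; rw [h] at hT1c; simp at hT1c; omega
      have hne2 : T2 ≠ ∅ := by
        intro h; rw [h] at hT2c; simp at hT2c; omega
      rw [if_neg hne2, if_neg hne1]
      have := mul_ne_zero hT1 hT2
      intro hcon
      apply this
      have : (2:ℝ) * (coeff (Rl f) T1 * coeff (Rl g) T2) = 0 := by linarith [hcon]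
      linarith [this]
  · intro k
    rcases cases_fin k with ⟨i, rfl⟩ | ⟨j, rfl⟩
    · obtain ⟨x, x', hxx, hne⟩ := hf.ess i
      refine ⟨Fin.append x (fun _ => 0), Fin.append x' (fun _ => 0), ?_, ?_⟩
      · intro t ht
        rcases cases_fin t with ⟨i', rfl⟩ | ⟨j', rfl⟩
        · rw [Fin.append_left, Fin.append_left]
          exact hxx i' (fun hii => ht (by rw [hii]))
        · rw [Fin.append_right, Fin.append_right]
      · simp only [bXOR, vL_append, vR_append]
        intro hcon
        apply hne
        cases hx : f x <;> cases hx' : f x' <;> rw [hx, hx'] at hcon <;> simp_all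
    · obtain ⟨y, y', hyy, hne⟩ := hg.ess j
      refine ⟨Fin.append (fun _ => 0) y, Fin.append (fun _ => 0) y', ?_, ?_⟩
      · intro t ht
        rcases cases_fin t with ⟨i', rfl⟩ | ⟨j', rfl⟩
        · rw [Fin.append_left, Fin.append_left]
        · rw [Fin.append_right, Fin.append_right]
          exact hyy j' (fun hjj => ht (by rw [hjj]))
      · simp only [bXOR, vL_append, vR_append]
        intro hcon
        apply hne
        cases hy : g y <;> cases hy' : g y' <;> rw [hy, hy'] at hcon <;> simp_all
  · rw [card_filter_eq_sum, sum_split]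
    have : ∀ x : Fin a → V, ∑ y : Fin b → V,
        (if bXOR f g (Fin.append x y) = true then 1 else 0)
        = (fun A => if A = true then (2^b - c2) else c2) (f x) := by
      intro x
      have e : ∀ y : Fin b → V, (if bXOR f g (Fin.append x y) = true then (1:ℕ) else 0)
          = (fun B => if (Bool.xor (f x) B) = true then (1:ℕ) else 0) (g y) := by
        intro y; simp only [bXOR, vL_append, vR_append]
      rw [Finset.sum_congr rfl (fun y _ => e y),
        sum_bool hg.cnt (fun B => if (Bool.xor (f x) B) = true then (1:ℕ) else 0)]
      cases hx : f x <;> simp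
    rw [Finset.sum_congr rfl (fun x _ => this x),
      sum_bool hf.cnt (fun A => if A = true then (2^b - c2) else c2)]
    simp
section MapLemmas
variable {a b : ℕ}

lemma pL_map_emL (S : Finset (Fin a)) : pL (S.map (emL (a:=a) (b:=b))) = S := by
  have := pL_union_maps S (∅ : Finset (Fin b))
  simpa using this

lemma pR_map_emL (S : Finset (Fin a)) : pR (S.map (emL (a:=a) (b:=b))) = ∅ := by
  have := pR_union_maps S (∅ : Finset (Fin b))
  simpa using this

lemma pL_map_emR (S : Finset (Fin b)) : pL ((S.map (emR (a:=a) (b:=b)))) = ∅ := by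
  have := pL_union_maps (∅ : Finset (Fin a)) S
  simpa using this

lemma pR_map_emR (S : Finset (Fin b)) : pR ((S.map (emR (a:=a) (b:=b)))) = S := by
  have := pR_union_maps (∅ : Finset (Fin a)) S
  simpa using this

end MapLemmas

def bMUX {n s : ℕ} (f : BF n) (c : BF s) : BF (n + n + s) :=
  fun z => cond (c (vR z)) (f (vL (vL z))) (f (vR (vL z)))

lemma spec_mux {n s d h c cc : ℕ} {f : BF n} {cf : BF s}
    (hf : Spec f d c) (hcf : Spec cf h cc) (hd : 1 ≤ d) (hh : 1 ≤ h)
    (hc0 : 0 < c) (hc1 : c < 2^n) (hcc0 : 0 < cc) (hcc1 : cc < 2^s) :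
    Spec (bMUX f cf) (d + h) (c * 2^(n+s)) := by
  set H2 : RF (n+n) := fun w => Rl f (vL w) with hH2
  set H3 : RF (n+n) := fun w => Rl f (vR w) with hH3
  have hid : Rl (bMUX f cf) = fun z => H3 (vL z)
      + (H2 (vL z) * Rl cf (vR z) - H3 (vL z) * Rl cf (vR z)) := by
    funext z
    cases hcz : cf (vR z) <;> simp [Rl, bMUX, hcz, hH2, hH3] <;> split <;> norm_num
  have hco : ∀ U, coeff (Rl (bMUX f cf)) U
      = (if pR U = ∅ then coeff H3 (pL U) else 0)
        + (coeff H2 (pL U) * coeff (Rl cf) (pR U)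
            - coeff H3 (pL U) * coeff (Rl cf) (pR U)) := by
    intro U
    rw [hid]
    have e1 : (fun z : Fin (n+n+s) → V => H3 (vL z)
        + (H2 (vL z) * Rl cf (vR z) - H3 (vL z) * Rl cf (vR z)))
        = fun z => (fun w => H3 (vL w)) z
            + ((fun w => H2 (vL w) * Rl cf (vR w)) z
              - (fun w => H3 (vL w) * Rl cf (vR w)) z) := rfl
    rw [e1, coeff_add, coeff_sub, coeff_liftL H3, coeff_mul_split H2 (Rl cf),
      coeff_mul_split H3 (Rl cf)]
  have cH2 : ∀ A, coeff H2 A = if pR A = ∅ then coeff (Rl f) (pL A) else 0 :=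
    fun A => coeff_liftL (Rl f) A
  have cH3 : ∀ A, coeff H3 A = if pL A = ∅ then coeff (Rl f) (pR A) else 0 :=
    fun A => coeff_liftR (Rl f) A
  constructor
  · intro T hT
    rw [hco] at hT
    have h3 : (if pR T = ∅ then coeff H3 (pL T) else 0) ≠ 0
        ∨ coeff H2 (pL T) * coeff (Rl cf) (pR T) ≠ 0
        ∨ coeff H3 (pL T) * coeff (Rl cf) (pR T) ≠ 0 := by
      by_contra hcon
      push_neg at hcon
      rw [hcon.1, hcon.2.1, hcon.2.2] at hT
      simp at hT
    have hTcard : T.card = (pL (pL T)).card + (pR (pL T)).card + (pR T).card := by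
      rw [card_decomp T, card_decomp (pL T)]
    rcases h3 with h3 | h3 | h3
    · split at h3
      · rw [cH3] at h3
        split at h3
        · have := hf.dle _ h3
          have e1 : (pR T).card = 0 := by rw [‹pR T = ∅›]; simp
          have e2 : (pL (pL T)).card = 0 := by rw [‹pL (pL T) = ∅›]; simp
          omega
        · simp at h3
      · simp at h3
    · have hB := hcf.dle _ (right_ne_zero_of_mul h3)
      have hA := left_ne_zero_of_mul h3
      rw [cH2] at hA
      split at hA
      · have := hf.dle _ hA
        have e2 : (pR (pL T)).card = 0 := by rw [‹pR (pL T) = ∅›]; simp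
        omega
      · simp at hA
    · have hB := hcf.dle _ (right_ne_zero_of_mul h3)
      have hA := left_ne_zero_of_mul h3
      rw [cH3] at hA
      split at hA
      · have := hf.dle _ hA
        have e2 : (pL (pL T)).card = 0 := by rw [‹pL (pL T) = ∅›]; simp
        omega
      · simp at hA
  · obtain ⟨Tf, hTfc, hTf⟩ := hf.top
    obtain ⟨Sc, hScc, hSc⟩ := hcf.top
    have hTfne : Tf ≠ ∅ := by
      intro hcon; rw [hcon] at hTfc; simp at hTfc; omega
    have hScne : Sc ≠ ∅ := by
      intro hcon; rw [hcon] at hScc; simp at hScc; omega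
    refine ⟨(Tf.map emL).map emL ∪ Sc.map emR, ?_, ?_⟩
    · rw [card_union_maps, Finset.card_map, hTfc, hScc]
    · rw [hco, pL_union_maps, pR_union_maps]
      have hmapne : Tf.map (emL (a:=n) (b:=n)) ≠ ∅ := by
        intro hcon
        apply hTfne
        rwa [Finset.map_eq_empty] at hcon
      rw [if_neg hScne, cH2, cH3, pL_map_emL, pR_map_emL]
      rw [if_pos rfl, if_neg hTfne]
      rw [zero_add, zero_mul, sub_zero]
      exact mul_ne_zero hTf hSc
  · intro k
    obtain ⟨xT, hxT⟩ := exists_true_pt hf.cnt hc0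
    obtain ⟨xF, hxF⟩ := exists_false_pt hf.cnt hc1
    obtain ⟨wT, hwT⟩ := exists_true_pt hcf.cnt hcc0
    rcases cases_fin k with ⟨u, rfl⟩ | ⟨j, rfl⟩
    · rcases cases_fin u with ⟨i, rfl⟩ | ⟨i, rfl⟩
      · -- x-block variable
        obtain ⟨x, x', hxx, hne⟩ := hf.ess i
        refine ⟨Fin.append (Fin.append x xT) wT, Fin.append (Fin.append x' xT) wT, ?_, ?_⟩
        · intro t ht
          rcases cases_fin t with ⟨u', rfl⟩ | ⟨j', rfl⟩
          · rw [Fin.append_left, Fin.append_left]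
            rcases cases_fin u' with ⟨i', rfl⟩ | ⟨i', rfl⟩
            · rw [Fin.append_left, Fin.append_left]
              refine hxx i' (fun hii => ht ?_)
              rw [hii]
            · rw [Fin.append_right, Fin.append_right]
          · rw [Fin.append_right, Fin.append_right]
        · simp only [bMUX, vL_append, vR_append, hwT, cond_true]
          exact hne
      · -- y-block variable
        obtain ⟨wF, hwF⟩ := exists_false_pt hcf.cnt hcc1
        obtain ⟨y, y', hyy, hne⟩ := hf.ess i
        refine ⟨Fin.append (Fin.append xT y) wF, Fin.append (Fin.append xT y') wF, ?_, ?_⟩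
        · intro t ht
          rcases cases_fin t with ⟨u', rfl⟩ | ⟨j', rfl⟩
          · rw [Fin.append_left, Fin.append_left]
            rcases cases_fin u' with ⟨i', rfl⟩ | ⟨i', rfl⟩
            · rw [Fin.append_left, Fin.append_left]
            · rw [Fin.append_right, Fin.append_right]
              refine hyy i' (fun hii => ht ?_)
              rw [hii]
          · rw [Fin.append_right, Fin.append_right]
        · simp only [bMUX, vL_append, vR_append, hwF, cond_false]
          exact hne
    · -- z-block variable
      obtain ⟨w, w', hww, hne⟩ := hcf.ess j
      refine ⟨Fin.append (Fin.append xT xF) w, Fin.append (Fin.append xT xF) w', ?_, ?_⟩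
      · intro t ht
        rcases cases_fin t with ⟨u', rfl⟩ | ⟨j', rfl⟩
        · rw [Fin.append_left, Fin.append_left]
        · rw [Fin.append_right, Fin.append_right]
          refine hww j' (fun hjj => ht ?_)
          rw [hjj]
      · simp only [bMUX, vL_append, vR_append]
        cases hw : cf w <;> cases hw' : cf w'
        · exact absurd (hw.trans hw'.symm) hne
        · simp [hxT, hxF]
        · simp [hxT, hxF]
        · exact absurd (hw.trans hw'.symm) hne
  · rw [card_filter_eq_sum, sum_split]
    have step1 : ∀ u : Fin (n+n) → V, ∑ w : Fin s → V,
        (if bMUX f cf (Fin.append u w) = true then (1:ℕ) else 0)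
        = cc * (if f (vL u) = true then 1 else 0)
          + (2^s - cc) * (if f (vR u) = true then 1 else 0) := by
      intro u
      have e : ∀ w : Fin s → V, (if bMUX f cf (Fin.append u w) = true then (1:ℕ) else 0)
          = (fun C => if (cond C (f (vL u)) (f (vR u))) = true then (1:ℕ) else 0) (cf w) := by
        intro w; simp only [bMUX, vL_append, vR_append]
      rw [Finset.sum_congr rfl (fun w _ => e w),
        sum_bool hcf.cnt (fun C => if (cond C (f (vL u)) (f (vR u))) = true then (1:ℕ) else 0)]
      simp [smul_eq_mul]
    rw [Finset.sum_congr rfl (fun u _ => step1 u)]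
    rw [Finset.sum_add_distrib, ← Finset.mul_sum, ← Finset.mul_sum]
    have sL : ∑ u : Fin (n+n) → V, (if f (vL u) = true then (1:ℕ) else 0) = c * 2^n := by
      rw [sum_split]
      have : ∀ x : Fin n → V, ∑ y : Fin n → V,
          (if f (vL (Fin.append x y)) = true then (1:ℕ) else 0)
          = 2^n * (if f x = true then 1 else 0) := by
        intro x
        rw [Finset.sum_congr rfl (fun y _ => by rw [vL_append]), Finset.sum_const,
          Finset.card_univ, card_space, smul_eq_mul]
      rw [Finset.sum_congr rfl (fun x _ => this x), ← Finset.mul_sum,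
        ← card_filter_eq_sum, hf.cnt]
      ring
    have sR : ∑ u : Fin (n+n) → V, (if f (vR u) = true then (1:ℕ) else 0) = 2^n * c := by
      rw [sum_split]
      have : ∀ x : Fin n → V, ∑ y : Fin n → V,
          (if f (vR (Fin.append x y)) = true then (1:ℕ) else 0)
          = (if f x = true then 0 else 0) + c := by
        intro x
        rw [Finset.sum_congr rfl (fun y _ => by rw [vR_append]), ← card_filter_eq_sum, hf.cnt]
        simp
      rw [Finset.sum_congr rfl (fun x _ => this x)]
      simp [Finset.sum_const, Finset.card_univ, card_space, mul_comm]
    rw [sL, sR]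
    have hcc2 : cc ≤ 2^s := le_of_lt hcc1
    have : cc * (c * 2^n) + (2^s - cc) * (2^n * c) = 2^s * (c * 2^n) := by
      rw [Nat.mul_comm (2^n) c, ← Nat.add_mul]
      congr 1
      omega
    rw [this, pow_add]
    ring
def w0b : BF 2 := fun w => decide (w 0 = 1)
def w1b : BF 2 := fun w => decide (w 1 = 1)
def nw0b : BF 2 := fun w => decide (w 0 = 0)

noncomputable def Wr : RF 2 := Rl nw0b
noncomputable def Ur : RF 2 := fun w => (Rl w0b w + Rl w1b w) - 1
noncomputable def Vr : RF 2 := fun w => Rl w0b w - Rl w1b w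

lemma card2_eq_univ {T : Finset (Fin 2)} (h : 1 < T.card) : T = Finset.univ := by
  apply Finset.eq_univ_of_card
  have h2 : T.card ≤ 2 := by
    have := Finset.card_le_univ T
    simpa using this
  simp
  omega

lemma icoeff_cast {n : ℕ} (f : BF n) (T : Finset (Fin n)) :
    coeff (Rl f) T = (icoeff f T : ℝ) := coeff_Rl f T

lemma coeff_Ur (T : Finset (Fin 2)) :
    coeff Ur T = (icoeff w0b T : ℝ) + icoeff w1b T - (if T = ∅ then 1 else 0) := by
  have e : Ur = fun w => ((fun v => Rl w0b v + Rl w1b v) w - (fun _ : Fin 2 → V => (1:ℝ)) w) := rfl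
  rw [e, coeff_sub]
  have e2 : (fun v : Fin 2 → V => Rl w0b v + Rl w1b v)
      = fun v => (Rl w0b) v + (Rl w1b) v := rfl
  rw [e2, coeff_add, coeff_const, icoeff_cast, icoeff_cast]

lemma coeff_Vr (T : Finset (Fin 2)) :
    coeff Vr T = (icoeff w0b T : ℝ) - icoeff w1b T := by
  have e : Vr = fun w => (Rl w0b) w - (Rl w1b) w := rfl
  rw [e, coeff_sub, icoeff_cast, icoeff_cast]

lemma dle_Wr : ∀ T, coeff Wr T ≠ 0 → T.card ≤ 1 := by
  intro T hT
  by_contra hcon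
  push_neg at hcon
  rw [card2_eq_univ hcon] at hT
  rw [Wr, icoeff_cast] at hT
  apply hT
  norm_num
  decide

lemma dle_Ur : ∀ T, coeff Ur T ≠ 0 → T.card ≤ 1 := by
  intro T hT
  by_contra hcon
  push_neg at hcon
  rw [card2_eq_univ hcon] at hT
  rw [coeff_Ur] at hT
  apply hT
  rw [if_neg (by simp [Finset.eq_empty_iff_forall_notMem])]
  rw [show icoeff w0b Finset.univ = 0 from by decide,
    show icoeff w1b Finset.univ = 0 from by decide]
  norm_num

lemma dle_Vr : ∀ T, coeff Vr T ≠ 0 → T.card ≤ 1 := by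
  intro T hT
  by_contra hcon
  push_neg at hcon
  rw [card2_eq_univ hcon] at hT
  rw [coeff_Vr] at hT
  apply hT
  rw [show icoeff w0b Finset.univ = 0 from by decide,
    show icoeff w1b Finset.univ = 0 from by decide]
  norm_num

lemma top_Ur : coeff Ur {0} = 1 := by
  rw [coeff_Ur]
  rw [if_neg (by simp)]
  rw [show icoeff w0b {0} = 1 from by decide, show icoeff w1b {0} = 0 from by decide]
  norm_num

def spcP (A B : Bool) (w : Fin 2 → V) : Bool :=
  Bool.xor (cond (decide (w 0 = w 1)) A B) (decide (w 0 = 0))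

def bSPC {n : ℕ} (f : BF n) : BF (n + n + 2) :=
  fun z => spcP (f (vL (vL z))) (f (vR (vL z))) (vR z)

lemma spcP_real (A B : Bool) (w : Fin 2 → V) :
    (if spcP A B w then (1:ℝ) else 0)
      = Wr w + (if A then (1:ℝ) else 0) * Ur w + (if B then (1:ℝ) else 0) * Vr w := by
  rcases zmod2_cases (w 0) with h0 | h0 <;> rcases zmod2_cases (w 1) with h1 | h1 <;>
    cases A <;> cases B <;>
      simp [spcP, Wr, Ur, Vr, Rl, w0b, w1b, nw0b, h0, h1] <;> norm_num

lemma spcP_count (A B : Bool) :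
    ∑ w : Fin 2 → V, (if spcP A B w = true then (1:ℕ) else 0) = 2 := by
  cases A <;> cases B <;> decide

lemma spec_spc {n d c : ℕ} {f : BF n} (hf : Spec f d c) (hd : 1 ≤ d)
    (hc0 : 0 < c) (hc1 : c < 2^n) :
    Spec (bSPC f) (d + 1) (2^(2*n + 1)) := by
  set H2 : RF (n+n) := fun w => Rl f (vL w) with hH2
  set H3 : RF (n+n) := fun w => Rl f (vR w) with hH3
  have hid : Rl (bSPC f) = fun z => Wr (vR z)
      + (H2 (vL z) * Ur (vR z) + H3 (vL z) * Vr (vR z)) := by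
    funext z
    have := spcP_real (f (vL (vL z))) (f (vR (vL z))) (vR z)
    simp only [Rl, bSPC, hH2, hH3]
    exact this.trans (by ring)
  have hco : ∀ U, coeff (Rl (bSPC f)) U
      = (if pL U = ∅ then coeff Wr (pR U) else 0)
        + (coeff H2 (pL U) * coeff Ur (pR U) + coeff H3 (pL U) * coeff Vr (pR U)) := by
    intro U
    rw [hid]
    have e1 : (fun z : Fin (n+n+2) → V => Wr (vR z)
        + (H2 (vL z) * Ur (vR z) + H3 (vL z) * Vr (vR z)))
        = fun z => (fun v => Wr (vR v)) z
            + ((fun v => H2 (vL v) * Ur (vR v)) z + (fun v => H3 (vL v) * Vr (vR v)) z) := rfl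
    rw [e1, coeff_add, coeff_add, coeff_liftR Wr, coeff_mul_split H2 Ur,
      coeff_mul_split H3 Vr]
  have cH2 : ∀ A, coeff H2 A = if pR A = ∅ then coeff (Rl f) (pL A) else 0 :=
    fun A => coeff_liftL (Rl f) A
  have cH3 : ∀ A, coeff H3 A = if pL A = ∅ then coeff (Rl f) (pR A) else 0 :=
    fun A => coeff_liftR (Rl f) A
  constructor
  · intro T hT
    rw [hco] at hT
    have h3 : (if pL T = ∅ then coeff Wr (pR T) else 0) ≠ 0
        ∨ coeff H2 (pL T) * coeff Ur (pR T) ≠ 0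
        ∨ coeff H3 (pL T) * coeff Vr (pR T) ≠ 0 := by
      by_contra hcon
      push_neg at hcon
      rw [hcon.1, hcon.2.1, hcon.2.2] at hT
      simp at hT
    have hTcard : T.card = (pL (pL T)).card + (pR (pL T)).card + (pR T).card := by
      rw [card_decomp T, card_decomp (pL T)]
    rcases h3 with h3 | h3 | h3
    · split at h3
      · have := dle_Wr _ h3
        have e1 : (pL T).card = 0 := by rw [‹pL T = ∅›]; simp
        rw [card_decomp T]
        omega
      · simp at h3
    · have hB := dle_Ur _ (right_ne_zero_of_mul h3)
      have hA := left_ne_zero_of_mul h3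
      rw [cH2] at hA
      split at hA
      · have := hf.dle _ hA
        have e2 : (pR (pL T)).card = 0 := by rw [‹pR (pL T) = ∅›]; simp
        omega
      · simp at hA
    · have hB := dle_Vr _ (right_ne_zero_of_mul h3)
      have hA := left_ne_zero_of_mul h3
      rw [cH3] at hA
      split at hA
      · have := hf.dle _ hA
        have e2 : (pL (pL T)).card = 0 := by rw [‹pL (pL T) = ∅›]; simp
        omega
      · simp at hA
  · obtain ⟨Tf, hTfc, hTf⟩ := hf.top
    have hTfne : Tf ≠ ∅ := by
      intro hcon; rw [hcon] at hTfc; simp at hTfc; omega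
    refine ⟨(Tf.map emL).map emL ∪ ({0} : Finset (Fin 2)).map emR, ?_, ?_⟩
    · rw [card_union_maps, Finset.card_map, hTfc]
      simp
    · rw [hco, pL_union_maps, pR_union_maps]
      have hmapne : Tf.map (emL (a:=n) (b:=n)) ≠ ∅ := by
        intro hcon
        apply hTfne
        rwa [Finset.map_eq_empty] at hcon
      rw [if_neg hmapne, cH2, cH3, pL_map_emL, pR_map_emL]
      rw [if_pos rfl, if_neg hTfne]
      rw [zero_add, zero_mul, add_zero, top_Ur, mul_one]
      exact hTf
  · intro k
    obtain ⟨xT, hxT⟩ := exists_true_pt hf.cnt hc0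
    obtain ⟨xF, hxF⟩ := exists_false_pt hf.cnt hc1
    have w11 : Fin 2 → V := fun _ => 1
    rcases cases_fin k with ⟨u, rfl⟩ | ⟨j, rfl⟩
    · rcases cases_fin u with ⟨i, rfl⟩ | ⟨i, rfl⟩
      · -- x-block: use z-part (1,1): G = f x
        obtain ⟨x, x', hxx, hne⟩ := hf.ess i
        refine ⟨Fin.append (Fin.append x xT) (fun _ => 1),
          Fin.append (Fin.append x' xT) (fun _ => 1), ?_, ?_⟩
        · intro t ht
          rcases cases_fin t with ⟨u', rfl⟩ | ⟨j', rfl⟩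
          · rw [Fin.append_left, Fin.append_left]
            rcases cases_fin u' with ⟨i', rfl⟩ | ⟨i', rfl⟩
            · rw [Fin.append_left, Fin.append_left]
              refine hxx i' (fun hii => ht ?_)
              rw [hii]
            · rw [Fin.append_right, Fin.append_right]
          · rw [Fin.append_right, Fin.append_right]
        · simp only [bSPC, spcP, vL_append, vR_append]
          norm_num
          exact fun h => hne h
      · -- y-block: use z-part (1,0): G = f y
        obtain ⟨y, y', hyy, hne⟩ := hf.ess i
        refine ⟨Fin.append (Fin.append xT y) (fun j => if j = 0 then 1 else 0),
          Fin.append (Fin.append xT y') (fun j => if j = 0 then 1 else 0), ?_, ?_⟩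
        · intro t ht
          rcases cases_fin t with ⟨u', rfl⟩ | ⟨j', rfl⟩
          · rw [Fin.append_left, Fin.append_left]
            rcases cases_fin u' with ⟨i', rfl⟩ | ⟨i', rfl⟩
            · rw [Fin.append_left, Fin.append_left]
            · rw [Fin.append_right, Fin.append_right]
              refine hyy i' (fun hii => ht ?_)
              rw [hii]
          · rw [Fin.append_right, Fin.append_right]
        · simp only [bSPC, spcP, vL_append, vR_append]
          norm_num
          exact fun h => hne h
    · -- z-block variable j : Fin 2
      fin_cases j
      · refine ⟨Fin.append (Fin.append xF xF) (fun _ => 1),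
          Fin.append (Fin.append xF xF) (fun i => if i = 0 then 0 else 1), ?_, ?_⟩
        · intro t ht
          rcases cases_fin t with ⟨u', rfl⟩ | ⟨j', rfl⟩
          · rw [Fin.append_left, Fin.append_left]
          · rw [Fin.append_right, Fin.append_right]
            fin_cases j'
            · exact absurd rfl ht
            · norm_num
        · simp only [bSPC, spcP, vL_append, vR_append, hxF]
          norm_num
      · refine ⟨Fin.append (Fin.append xF xT) (fun _ => 1),
          Fin.append (Fin.append xF xT) (fun i => if i = 1 then 0 else 1), ?_, ?_⟩
        · intro t ht
          rcases cases_fin t with ⟨u', rfl⟩ | ⟨j', rfl⟩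
          · rw [Fin.append_left, Fin.append_left]
          · rw [Fin.append_right, Fin.append_right]
            fin_cases j'
            · norm_num
            · exact absurd rfl ht
        · simp only [bSPC, spcP, vL_append, vR_append, hxF, hxT]
          norm_num
  · rw [card_filter_eq_sum, sum_split]
    have step1 : ∀ u : Fin (n+n) → V, ∑ w : Fin 2 → V,
        (if bSPC f (Fin.append u w) = true then (1:ℕ) else 0) = 2 := by
      intro u
      have e : ∀ w : Fin 2 → V, (if bSPC f (Fin.append u w) = true then (1:ℕ) else 0)
          = (if spcP (f (vL u)) (f (vR u)) w = true then (1:ℕ) else 0) := by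
        intro w; simp only [bSPC, vL_append, vR_append]
      rw [Finset.sum_congr rfl (fun w _ => e w), spcP_count]
    rw [Finset.sum_congr rfl (fun u _ => step1 u), Finset.sum_const,
      Finset.card_univ, card_space, smul_eq_mul]
    rw [show 2*n + 1 = (n + n) + 1 by ring, pow_succ]
def X1 : BF 1 := fun x => decide (x 0 = 1)
def T3 : BF 3 := fun x =>
  decide ((x 0 = 1 ∧ x 1 = 1 ∧ x 2 = 0) ∨ (x 0 = 0 ∧ x 1 = 0 ∧ x 2 = 1))
def Q4 : BF 4 := fun x => decide ((x 0 = 0 ∧ x 1 = 0 ∧ x 2 = 1 ∧ x 3 = 1) ∨ (x 0 = 0 ∧ x 1 = 1 ∧ x 2 = 0 ∧ x 3 = 0) ∨ (x 0 = 0 ∧ x 1 = 1 ∧ x 2 = 1 ∧ x 3 = 0) ∨ (x 0 = 0 ∧ x 1 = 1 ∧ x 2 = 1 ∧ x 3 = 1) ∨ (x 0 = 1 ∧ x 1 = 0 ∧ x 2 = 0 ∧ x 3 = 0) ∨ (x 0 = 1 ∧ x 1 = 0 ∧ x 2 = 0 ∧ x 3 = 1) ∨ (x 0 = 1 ∧ x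 1 = 0 ∧ x 2 = 1 ∧ x 3 = 1) ∨ (x 0 = 1 ∧ x 1 = 1 ∧ x 2 = 0 ∧ x 3 = 0))

lemma dle_of_idle {n d : ℕ} {f : BF n} (h : ∀ T, icoeff f T ≠ 0 → T.card ≤ d) :
    ∀ T, coeff (Rl f) T ≠ 0 → T.card ≤ d := by
  intro T hT
  refine h T (fun h0 => hT ?_)
  rw [icoeff_cast, h0]
  norm_num

lemma top_of_itop {n d : ℕ} {f : BF n} (T : Finset (Fin n)) (hc : T.card = d)
    (h : icoeff f T ≠ 0) : ∃ T, T.card = d ∧ coeff (Rl f) T ≠ 0 := by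
  refine ⟨T, hc, ?_⟩
  rw [icoeff_cast]
  exact_mod_cast h

lemma spec_X1 : Spec X1 1 1 := by
  constructor
  · intro T _
    have := Finset.card_le_univ T
    simpa using this
  · exact top_of_itop {0} (by simp) (by decide)
  · unfold EssentialDep; decide
  · decide

lemma spec_T3 : Spec T3 2 2 := by
  constructor
  · exact dle_of_idle (by decide)
  · exact top_of_itop {0,1} (by simp) (by decide)
  · unfold EssentialDep; decide
  · decide

lemma spec_Q4 : Spec Q4 2 8 := by
  constructor
  · exact dle_of_idle (by decide)
  · exact top_of_itop {0,1} (by simp) (by decide)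
  · unfold EssentialDep; decide
  · decide
structure GF where
  n : ℕ
  f : BF n

def gNOT (F : GF) : GF := ⟨F.n, bNOT F.f⟩
def gAND (F G : GF) : GF := ⟨F.n + G.n, bAND F.f G.f⟩
def gXOR (F G : GF) : GF := ⟨F.n + G.n, bXOR F.f G.f⟩
def gMUX (F C : GF) : GF := ⟨F.n + F.n + C.n, bMUX F.f C.f⟩
def gSPC (F : GF) : GF := ⟨F.n + F.n + 2, bSPC F.f⟩

def QX : ℕ → GF
  | 0 => ⟨4, Q4⟩
  | m+1 => gXOR ⟨4, Q4⟩ (QX m)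

lemma QX_n (m : ℕ) : (QX m).n = 4*m + 4 := by
  induction m with
  | zero => rfl
  | succ m ih =>
    show 4 + (QX m).n = _
    omega

lemma QX_spec (m : ℕ) : Spec (QX m).f (2*m + 2) (2^(4*m + 3)) := by
  induction m with
  | zero => exact spec_Q4
  | succ m ih =>
    have h := spec_xor (a := 4) (b := (QX m).n) spec_Q4 ih (by omega) (by omega)
    have hn := QX_n m
    have e1 : 2^(QX m).n - 2^(4*m+3) = 2^(4*m+3) := by
      rw [hn]
      have : (4*m+4) = (4*m+3) + 1 := by omega
      rw [this, pow_succ]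
      omega
    have e2 : 8 * (2 ^ (QX m).n - 2 ^ (4 * m + 3)) + (2 ^ 4 - 8) * 2 ^ (4 * m + 3)
        = 2 ^ (4 * (m+1) + 3) := by
      rw [e1]
      have : 4*(m+1) + 3 = (4*m+3) + 4 := by omega
      rw [this, show (2:ℕ)^((4*m+3) + 4) = 2^(4*m+3) * 2^4 from pow_add 2 _ _]
      omega
    have e3 : 2*(m+1) + 2 = 2 + (2*m+2) := by omega
    rw [e3, ← e2]
    exact h

def BSE : ℕ → ℕ → GF
  | 0, r => if r = 1 then ⟨3, T3⟩ else ⟨3, bNOT T3⟩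
  | (j+1), r =>
      if r < 2^(j+2) then gAND (BSE j r) (QX (2^j - 1))
      else gNOT (gAND (BSE j (2^(j+3) - r)) (QX (2^j - 1)))

lemma QXB_n (j : ℕ) : (QX (2^j - 1)).n = 2^(j+2) := by
  rw [QX_n]
  have h1 : 1 ≤ 2^j := Nat.one_le_two_pow
  have : 2^(j+2) = 4 * 2^j := by rw [pow_add]; ring
  omega

lemma QXB_spec (j : ℕ) : Spec (QX (2^j - 1)).f (2^(j+1)) (2^(2^(j+2) - 1)) := by
  have h := QX_spec (2^j - 1)
  have h1 : 1 ≤ 2^j := Nat.one_le_two_pow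
  have e1 : 2*(2^j - 1) + 2 = 2^(j+1) := by
    rw [pow_add]
    omega
  have e2 : 4*(2^j - 1) + 3 = 2^(j+2) - 1 := by
    have : 2^(j+2) = 4 * 2^j := by rw [pow_add]; ring
    omega
  rw [e1, e2] at h
  exact h

lemma BSE_spec : ∀ j r, Odd r → 0 < r → r < 2^(j+2) →
    (BSE j r).n = 2^(j+2) - 1 ∧
    Spec (BSE j r).f (2^(j+1)) (r * 2^(2^(j+2) - 1 - (j+2))) := by
  intro j
  induction j with
  | zero =>
    intro r hodd h0 hlt
    norm_num at hlt
    have : r = 1 ∨ r = 3 := by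
      rcases hodd with ⟨t, rfl⟩
      omega
    rcases this with rfl | rfl
    · exact ⟨by simp [BSE], by simpa [BSE] using spec_T3⟩
    · refine ⟨by simp [BSE], ?_⟩
      have hd : BSE 0 3 = ⟨3, bNOT T3⟩ := by simp [BSE]
      rw [hd]
      have := spec_not spec_T3 (by omega)
      simpa using this
  | succ j ih =>
    intro r hodd h0 hlt
    have hA : j+1+2 = j+3 := rfl
    have hB : j+1+1 = j+2 := rfl
    rw [hA] at hlt
    rw [hA, hB]
    have hQ := QXB_spec j
    have hQpos : 0 < 2^(2^(j+2) - 1) := by positivity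
    have hnsum : (2^(j+2) - 1) + 2^(j+2) = 2^(j+3) - 1 := by
      have h2 : 2^(j+3) = 2 * 2^(j+2) := by rw [pow_succ]; ring
      have : 1 ≤ 2^(j+2) := Nat.one_le_two_pow
      omega
    have hexp : (2^(j+2) - 1 - (j+2)) + (2^(j+2) - 1) = 2^(j+3) - 1 - (j+3) := by
      have h2 : 2^(j+3) = 2 * 2^(j+2) := by rw [pow_succ]; ring
      have h3 : j + 3 ≤ 2^(j+2) := by
        clear * -
        induction j with
        | zero => norm_num
        | succ j ih =>
          have : 2^(j+1+2) = 2*2^(j+2) := by rw [pow_succ]; ring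
          omega
      omega
    have h3 : j + 3 ≤ 2^(j+2) := by
      clear * -
      induction j with
      | zero => norm_num
      | succ j ih =>
        have : 2^(j+1+2) = 2*2^(j+2) := by rw [pow_succ]; ring
        omega
    have h23 : 2^(j+3) = 2 * 2^(j+2) := by rw [pow_succ]; ring
    have h22 : 2^(j+2) = 2 * 2^(j+1) := by rw [pow_succ]; ring
    have hdeg : 2^(j+1) + 2^(j+1) = 2^(j+2) := by omega
    by_cases hcase : r < 2^(j+2)
    · obtain ⟨hn, hsp⟩ := ih r hodd h0 hcase
      have hdef : BSE (j+1) r = gAND (BSE j r) (QX (2^j - 1)) := by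
        rw [BSE, if_pos hcase]
      have hand := spec_and hsp hQ (by positivity) hQpos
      have hcnt : (r * 2^(2^(j+2) - 1 - (j+2))) * 2^(2^(j+2) - 1)
          = r * 2^(2^(j+3) - 1 - (j+3)) := by
        rw [mul_assoc, ← pow_add, hexp]
      constructor
      · rw [hdef]
        show (BSE j r).n + (QX (2^j - 1)).n = _
        rw [hn, QXB_n]
        exact hnsum
      · rw [hdef]
        show Spec (bAND (BSE j r).f (QX (2^j - 1)).f) _ _
        rw [← hdeg, ← hcnt]
        exact hand
    · have hr' : Odd (2^(j+3) - r) ∧ 0 < 2^(j+3) - r ∧ 2^(j+3) - r < 2^(j+2) := by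
        rcases Nat.odd_iff.1 hodd with hmod
        refine ⟨Nat.odd_iff.2 (by omega), by omega, by omega⟩
      obtain ⟨hodd', h0', hlt'⟩ := hr'
      obtain ⟨hn', hsp'⟩ := ih _ hodd' h0' hlt'
      have hdef : BSE (j+1) r = gNOT (gAND (BSE j (2^(j+3) - r)) (QX (2^j - 1))) := by
        rw [BSE, if_neg hcase]
      have hand := spec_and hsp' hQ (by positivity) hQpos
      have hnand : (BSE j (2^(j+3) - r)).n + (QX (2^j - 1)).n = 2^(j+3) - 1 := by
        rw [hn', QXB_n]
        exact hnsum
      have hcnt' : ((2^(j+3) - r) * 2^(2^(j+2) - 1 - (j+2))) * 2^(2^(j+2) - 1)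
          = (2^(j+3) - r) * 2^(2^(j+3) - 1 - (j+3)) := by
        rw [mul_assoc, ← pow_add, hexp]
      have hand2 : Spec (bAND (BSE j (2^(j+3) - r)).f (QX (2^j - 1)).f) (2^(j+2))
          ((2^(j+3) - r) * 2^(2^(j+3) - 1 - (j+3))) := by
        rw [← hdeg, ← hcnt']
        exact hand
      have hnot := spec_not hand2 Nat.one_le_two_pow
      constructor
      · rw [hdef]
        show (BSE j (2^(j+3) - r)).n + (QX (2^j - 1)).n = _
        exact hnand
      · rw [hdef]
        show Spec (bNOT (bAND (BSE j (2^(j+3) - r)).f (QX (2^j - 1)).f)) _ _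
        have hfinal : 2^((BSE j (2^(j+3) - r)).n + (QX (2^j - 1)).n)
            - (2^(j+3) - r) * 2^(2^(j+3) - 1 - (j+3))
            = r * 2^(2^(j+3) - 1 - (j+3)) := by
          rw [hnand]
          have hle : j + 3 ≤ 2^(j+3) - 1 := by omega
          have hsplit : 2^(2^(j+3) - 1) = 2^(j+3) * 2^(2^(j+3) - 1 - (j+3)) := by
            rw [← pow_add]
            congr 1
            omega
          rw [hsplit, ← Nat.sub_mul]
          congr 1
          omega
        rw [← hfinal]
        exact hnot
lemma spec_hbd {n d c : ℕ} {f : BF n} (h : Spec f d c) : HasBooleanDegree f d :=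
  ⟨coeff (Rl f), fun x => inversion (Rl f) x, h.dle, h.top⟩

def F1 : ℕ → GF
  | 0 => ⟨1, X1⟩
  | t+1 => gSPC (F1 t)

lemma F1_spec (t : ℕ) : ∃ m, (F1 t).n = m ∧ m + 2 = 3 * 2^t ∧ 1 ≤ m ∧
    Spec (F1 t).f (t+1) (2^(m-1)) := by
  induction t with
  | zero => exact ⟨1, rfl, by norm_num, by omega, spec_X1⟩
  | succ t ih =>
    obtain ⟨m, hm, hm2, hm1, hsp⟩ := ih
    subst hm
    refine ⟨(F1 t).n + (F1 t).n + 2, rfl, by rw [pow_succ]; omega, by omega, ?_⟩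
    have hc1 : (2:ℕ)^((F1 t).n - 1) < 2^(F1 t).n :=
      Nat.pow_lt_pow_right one_lt_two (by omega)
    have h := spec_spc hsp (by omega) (by positivity) hc1
    show Spec (bSPC (F1 t).f) (t+1+1) (2^(((F1 t).n + (F1 t).n + 2) - 1))
    rw [show ((F1 t).n + (F1 t).n + 2) - 1 = 2*(F1 t).n + 1 from by omega]
    exact h

def FK (j r : ℕ) : ℕ → GF
  | 0 => BSE j r
  | t+1 => gMUX (FK j r t) (QX (2^j - 1))

lemma FK_spec (j r : ℕ) (hodd : Odd r) (h0 : 0 < r) (hlt : r < 2^(j+2)) :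
    ∀ t, ∃ m, (FK j r t).n = m ∧ m + 2^(j+2) = (2^(j+3) - 1) * 2^t ∧ j + 2 ≤ m ∧
    Spec (FK j r t).f (2^(j+1) * (t+1)) (r * 2^(m - (j+2))) := by
  have h23 : (2:ℕ)^(j+3) = 2 * 2^(j+2) := by rw [pow_succ]; ring
  have h3 : j + 3 ≤ 2^(j+2) := by
    clear * -
    induction j with
    | zero => norm_num
    | succ j ih =>
      have : 2^(j+1+2) = 2*2^(j+2) := by rw [pow_succ]; ring
      omega
  intro t
  induction t with
  | zero =>
    obtain ⟨hn, hsp⟩ := BSE_spec j r hodd h0 hlt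
    refine ⟨2^(j+2) - 1, hn, by rw [pow_zero, mul_one]; omega, by omega, ?_⟩
    simpa [FK] using hsp
  | succ t ih =>
    obtain ⟨m, hm, hm2, hmge, hsp⟩ := ih
    subst hm
    have hQ := QXB_spec j
    have hQn := QXB_n j
    have hc1 : r * 2^((FK j r t).n - (j+2)) < 2^((FK j r t).n) := by
      have hsplit : (2:ℕ)^((FK j r t).n) = 2^(j+2) * 2^((FK j r t).n - (j+2)) := by
        rw [← pow_add]
        congr 1
        omega
      rw [hsplit]
      exact Nat.mul_lt_mul_of_lt_of_le hlt (le_refl _) (by positivity)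
    have hcc1 : (2:ℕ)^(2^(j+2) - 1) < 2^((QX (2^j - 1)).n) := by
      rw [hQn]
      exact Nat.pow_lt_pow_right one_lt_two (by omega)
    have h := spec_mux hsp hQ (Nat.one_le_iff_ne_zero.mpr (by positivity))
      (Nat.one_le_iff_ne_zero.mpr (by positivity))
      (by positivity) hc1 (by positivity) hcc1
    refine ⟨(FK j r t).n + (FK j r t).n + 2^(j+2), ?_, ?_, by omega, ?_⟩
    · rw [show FK j r (t+1) = gMUX (FK j r t) (QX (2^j - 1)) from rfl]
      show (FK j r t).n + (FK j r t).n + (QX (2^j - 1)).n = _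
      omega
    · have : (2^(j+3) - 1) * 2^(t+1) = ((2^(j+3) - 1) * 2^t) * 2 := by
        rw [pow_succ]; ring
      omega
    · rw [show FK j r (t+1) = gMUX (FK j r t) (QX (2^j - 1)) from rfl]
      show Spec (bMUX (FK j r t).f (QX (2^j - 1)).f) _ _
      have hd : 2^(j+1) * (t + 1) + 2^(j+1) = 2^(j+1) * (t+1+1) := by ring
      have hcnt : (r * 2^((FK j r t).n - (j+2))) * 2^((FK j r t).n + (QX (2^j - 1)).n)
          = r * 2^(((FK j r t).n + (FK j r t).n + 2^(j+2)) - (j+2)) := by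
        rw [hQn, mul_assoc, ← pow_add]
        congr 2
        omega
      rw [← hd, ← hcnt]
      exact h

/-- If `ρ = r/s` with `s` a power of 2, `r` odd, `0 < r < s`, then for every `e ≥ 1`
there is a Boolean function of degree `e·s/2` in `n = (2s-1)·2^{e-1} - s` variables,
essentially depending on all variables, whose density of ones is `ρ`. -/
theorem stmt17 (r s : ℕ) (hs : ∃ k, s = 2 ^ k) (hr : Odd r) (h0 : 0 < r) (hrs : r < s)
    (e : ℕ) (he : 0 < e) (n : ℕ) (hn : n = (2 * s - 1) * 2 ^ (e - 1) - s) :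
    ∃ f : (Fin n → ZMod 2) → Bool,
      HasBooleanDegree f (e * s / 2) ∧
      (∀ k, EssentialDep f k) ∧
      (Finset.univ.filter fun x => f x = true).card * s = r * 2 ^ n := by
  obtain ⟨k, rfl⟩ := hs
  rcases k with _ | k
  · exfalso
    norm_num at hrs
    omega
  rcases k with _ | j
  · -- k = 1
    have hr1 : r = 1 := by
      rcases hr with ⟨t, rfl⟩
      norm_num at hrs
      omega
    subst hr1
    obtain ⟨m, hm, hm2, hm1, hsp⟩ := F1_spec (e-1)
    have hnn : n = (F1 (e-1)).n := by
      rw [hm, hn]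
      norm_num
      omega
    rw [hnn]
    refine ⟨(F1 (e-1)).f, ?_, hsp.ess, ?_⟩
    · have hdeg : e * 2^1 / 2 = e := by norm_num
      rw [hdeg]
      have := spec_hbd hsp
      rwa [show e - 1 + 1 = e from by omega] at this
    · rw [hsp.cnt, hm]
      have : (2:ℕ)^(m-1) * 2^1 = 2^m := by
        rw [← pow_add]
        congr 1
        omega
      rw [this, one_mul]
  · -- k = j + 2
    have hA : j+1+1 = j+2 := rfl
    rw [hA] at hrs hn ⊢
    obtain ⟨m, hm, hm2, hmge, hsp⟩ := FK_spec j r hr h0 hrs (e-1)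
    have h23 : (2:ℕ)^(j+3) = 2 * 2^(j+2) := by rw [pow_succ]; ring
    have hprod : (2 * 2^(j+2) - 1) * 2^(e-1) = (2^(j+3) - 1) * 2^(e-1) := by
      congr 2
      omega
    have hnn : n = (FK j r (e-1)).n := by
      rw [hm, hn]
      omega
    rw [hnn]
    refine ⟨(FK j r (e-1)).f, ?_, hsp.ess, ?_⟩
    · have hdeg : e * 2^(j+2) / 2 = 2^(j+1) * e := by
        rw [show (2:ℕ)^(j+2) = 2^(j+1) * 2 from by rw [pow_succ]]
        rw [show e * (2^(j+1) * 2) = (2^(j+1) * e) * 2 from by ring]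
        exact Nat.mul_div_cancel _ (by omega)
      rw [hdeg]
      have := spec_hbd hsp
      rwa [show e - 1 + 1 = e from by omega] at this
    · rw [hsp.cnt, hm]
      rw [mul_assoc, ← pow_add]
      congr 2
      omega
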